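/- Let ℓ be a positive integer, let ζ ∈ ℂ be a primitive 2ℓ-th root of unity (e.g. ζ = e^{πi/ℓ}), and let R = ℤ[ζ] be the subring of ℂ generated by ζ (Algebra.adjoin ℤ {ζ}). Let S ⊆ ℕ be an infinite set of positive integers. If a ∈ R is such that for every q ∈ S the element ζ² − q divides a in R (i.e. there exists b ∈ R with a = (ζ² − q)·b), then a = 0. In other words, the intersection of the principal ideals (ζ² − q) over q ∈ S is the zero ideal. -/

import Mathlib

open scoped BigOperators
open IntermediateField

lemma aux_norm_bound (K : Type*) [Field K] [Algebra ℚ K] [FiniteDimensional ℚ K]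
    (z A : K) (hz : ∀ σ : K →ₐ[ℚ] ℂ, ‖σ z‖ = 1)
    (hA : IsIntegral ℤ A) (hAne : A ≠ 0)
    (H : ∀ N : ℕ, ∃ q : ℕ, N < q ∧ ∃ B : K, IsIntegral ℤ B ∧ A = (z ^ 2 - (q : K)) * B) :
    False := by
  haveI : CharZero K := charZero_of_injective_algebraMap (algebraMap ℚ K).injective
  haveI : Algebra.IsAlgebraic ℚ K := Algebra.IsAlgebraic.of_finite ℚ K
  obtain ⟨nA, hnA⟩ : ∃ m : ℤ, (m : ℚ) = Algebra.norm ℚ A :=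
    IsIntegrallyClosed.isIntegral_iff.mp (Algebra.isIntegral_norm ℚ hA)
  have hnAne : nA ≠ 0 := fun h =>
    hAne (Algebra.norm_eq_zero_iff.mp (by rw [← hnA, h]; norm_num))
  obtain ⟨q, hqgt, B, hB, hAB⟩ := H (nA.natAbs + 1)
  have hq2 : 2 ≤ q := by omega
  have hBne : B ≠ 0 := by
    intro h; rw [h, mul_zero] at hAB; exact hAne hAB
  obtain ⟨nB, hnB⟩ : ∃ m : ℤ, (m : ℚ) = Algebra.norm ℚ B :=
    IsIntegrallyClosed.isIntegral_iff.mp (Algebra.isIntegral_norm ℚ hB)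
  have hnBne : nB ≠ 0 := fun h =>
    hBne (Algebra.norm_eq_zero_iff.mp (by rw [← hnB, h]; norm_num))
  -- product formula over embeddings
  have hProd : ∀ x : K, ‖(((Algebra.norm ℚ x : ℚ)) : ℂ)‖ =
      ∏ σ : K →ₐ[ℚ] ℂ, ‖σ x‖ := by
    intro x
    rw [show (((Algebra.norm ℚ x : ℚ)) : ℂ) = algebraMap ℚ ℂ (Algebra.norm ℚ x) from rfl,
      Algebra.norm_eq_prod_embeddings, norm_prod]
  set C : K := z ^ 2 - (q : K) with hC
  -- each embedding of C is large
  have hfac : ∀ σ : K →ₐ[ℚ] ℂ, (q : ℝ) - 1 ≤ ‖σ C‖ := by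
    intro σ
    have h1 : ‖σ C‖ = ‖(q : ℂ) - σ z ^ 2‖ := by
      rw [hC, map_sub, map_pow, map_natCast, norm_sub_rev]
    calc (q : ℝ) - 1 = ‖(q : ℂ)‖ - ‖σ z ^ 2‖ := by
          rw [norm_pow, hz σ, Complex.norm_natCast]; ring
      _ ≤ ‖(q : ℂ) - σ z ^ 2‖ := by
          have h2 := norm_sub_norm_le (q : ℂ) (σ z ^ 2)
          linarith
      _ = ‖σ C‖ := h1.symm
  have hfac1 : ∀ σ : K →ₐ[ℚ] ℂ, (1 : ℝ) ≤ ‖σ C‖ := by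
    intro σ
    refine le_trans ?_ (hfac σ)
    have : (2 : ℝ) ≤ (q : ℝ) := by exact_mod_cast hq2
    linarith
  obtain ⟨σ₀⟩ : Nonempty (K →ₐ[ℚ] ℂ) := ⟨IsAlgClosed.lift⟩
  have hCnorm : (q : ℝ) - 1 ≤ ‖(((Algebra.norm ℚ C : ℚ)) : ℂ)‖ := by
    rw [hProd C]
    haveI : Nonempty (K →ₐ[ℚ] ℂ) := ⟨σ₀⟩
    have hq1 : (1 : ℝ) ≤ (q : ℝ) - 1 := by
      have : (2 : ℝ) ≤ (q : ℝ) := by exact_mod_cast hq2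
      linarith
    have h1 : ((q : ℝ) - 1) ^ Fintype.card (K →ₐ[ℚ] ℂ) ≤ ∏ σ : K →ₐ[ℚ] ℂ, ‖σ C‖ := by
      rw [← Finset.card_univ, ← Finset.prod_const]
      exact Finset.prod_le_prod (fun i _ => by linarith) (fun i _ => hfac i)
    exact le_trans (le_self_pow₀ hq1 Fintype.card_ne_zero) h1
  have hBabs : (1 : ℝ) ≤ ‖(((Algebra.norm ℚ B : ℚ)) : ℂ)‖ := by
    rw [← hnB, show (((nB : ℚ)) : ℂ) = (nB : ℂ) by push_cast; ring, Complex.norm_intCast]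
    exact_mod_cast Int.one_le_abs hnBne
  have hAabs : ‖(((Algebra.norm ℚ A : ℚ)) : ℂ)‖ = (nA.natAbs : ℝ) := by
    rw [← hnA, show (((nA : ℚ)) : ℂ) = (nA : ℂ) by push_cast; ring, Complex.norm_intCast]
    rw [← Int.cast_abs, Int.abs_eq_natAbs, Int.cast_natCast]
  have hmul : ‖(((Algebra.norm ℚ A : ℚ)) : ℂ)‖ =
      ‖(((Algebra.norm ℚ C : ℚ)) : ℂ)‖ * ‖(((Algebra.norm ℚ B : ℚ)) : ℂ)‖ := by
    rw [show Algebra.norm ℚ A = Algebra.norm ℚ C * Algebra.norm ℚ B by rw [hAB, map_mul]]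
    push_cast
    rw [norm_mul]
  have hlarge : (q : ℝ) - 1 ≤ ‖(((Algebra.norm ℚ A : ℚ)) : ℂ)‖ := by
    rw [hmul]
    calc (q : ℝ) - 1 ≤ ‖(((Algebra.norm ℚ C : ℚ)) : ℂ)‖ := hCnorm
      _ = ‖(((Algebra.norm ℚ C : ℚ)) : ℂ)‖ * 1 := (mul_one _).symm
      _ ≤ _ := by
          apply mul_le_mul_of_nonneg_left hBabs (norm_nonneg _)
  have hsmall : (nA.natAbs : ℝ) + 1 < (q : ℝ) := by exact_mod_cast hqgt
  rw [hAabs] at hlarge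
  linarith

/-- Let `ζ ∈ ℂ` be a primitive `2ℓ`-th root of unity and `R = ℤ[ζ]` the subring of `ℂ` it
generates.  If `S ⊆ ℕ` is an infinite set of positive integers and `a ∈ R` is divisible in
`R` by `ζ² - q` for every `q ∈ S`, then `a = 0`; i.e. `⋂_{q ∈ S} (ζ² - q) = 0`. -/
theorem eq_zero_of_forall_dvd_in_adjoin_primitiveRoot (ℓ : ℕ) (hℓ : 0 < ℓ) (ζ : ℂ)
    (hζ : IsPrimitiveRoot ζ (2 * ℓ)) (S : Set ℕ) (hS : S.Infinite)
    (hSpos : ∀ q ∈ S, 0 < q) (a : ℂ) (ha : a ∈ Algebra.adjoin ℤ {ζ})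
    (hdvd : ∀ q ∈ S, ∃ b ∈ Algebra.adjoin ℤ {ζ}, a = (ζ ^ 2 - (q : ℂ)) * b) :
    a = 0 := by
  by_contra ha0
  have hζint : IsIntegral ℤ ζ := hζ.isIntegral (by omega)
  have hζintQ : IsIntegral ℚ ζ := hζint.tower_top
  haveI : FiniteDimensional ℚ ℚ⟮ζ⟯ := IntermediateField.adjoin.finiteDimensional hζintQ
  have hsub : ∀ x ∈ Algebra.adjoin ℤ ({ζ} : Set ℂ), x ∈ ℚ⟮ζ⟯ := by
    intro x hx
    refine Algebra.adjoin_le (S := Subalgebra.restrictScalars ℤ (ℚ⟮ζ⟯).toSubalgebra) ?_ hx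
    intro y hy
    rw [Set.mem_singleton_iff] at hy
    rw [hy]
    exact IntermediateField.mem_adjoin_simple_self ℚ ζ
  have hintK : ∀ (x : ℂ) (hx : x ∈ Algebra.adjoin ℤ ({ζ} : Set ℂ)),
      IsIntegral ℤ ((⟨x, hsub x hx⟩ : ℚ⟮ζ⟯)) := by
    intro x hx
    have h1 : IsIntegral ℤ x := IsIntegral.of_mem_of_fg _ hζint.fg_adjoin_singleton _ hx
    exact (isIntegral_algebraMap_iff (algebraMap ℚ⟮ζ⟯ ℂ).injective).mp h1
  apply aux_norm_bound ℚ⟮ζ⟯ (IntermediateField.AdjoinSimple.gen ℚ ζ) ⟨a, hsub a ha⟩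
  · intro σ
    have hpow : (IntermediateField.AdjoinSimple.gen ℚ ζ) ^ (2 * ℓ) = 1 := by
      apply Subtype.ext
      push_cast
      exact hζ.pow_eq_one
    have h2 : (σ (IntermediateField.AdjoinSimple.gen ℚ ζ)) ^ (2 * ℓ) = 1 := by
      rw [← map_pow, hpow, map_one]
    have h3 := Complex.norm_eq_one_of_pow_eq_one h2 (by omega)
    exact h3
  · exact hintK a ha
  · intro h
    exact ha0 (congrArg Subtype.val h)
  · intro N
    obtain ⟨q, hqS, hqN⟩ := hS.exists_gt N
    obtain ⟨b, hb, hab⟩ := hdvd q hqS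
    refine ⟨q, hqN, ⟨b, hsub b hb⟩, hintK b hb, ?_⟩
    apply Subtype.ext
    show a = _
    rw [hab]
    norm_cast
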